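/- Let m be a nonnegative integer, ε ∈ (0,1), λ > 0, and t₁ < t₂. Let ρ : [t₁, t₂] → ℝ be continuous with ρ(τ) ≥ ρ_min > 0 for all τ, and let 𝒳 : [t₁, t₂] → ℝ be continuously differentiable with 𝒳′(τ) ≥ 0 for all τ, 𝒳(t₁) = 4m+1 and 𝒳(t₂) = 4m+3. Then ∫_{t₁}^{t₂} (ρ(τ)·N(𝒳(τ))·𝒳′(τ) − 𝒳′(τ))·e^{λ(τ−t₂)} dτ ≤ −2ε·(ρ_min·cos((π/2)·ε)·exp((4m+2−ε)²) + 1)·e^{λ(t₁−t₂)}. -/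

import Mathlib

open Real

/-- The even smooth Nussbaum-type function `N(s) = exp(s²)·cos((π/2)·s)`. -/
noncomputable def Nfun (s : ℝ) : ℝ := Real.exp (s ^ 2) * Real.cos (Real.pi / 2 * s)

lemma Nfun_continuous : Continuous Nfun := by
  unfold Nfun; fun_prop

lemma Nfun_nonpos (m : ℕ) {s : ℝ} (h1 : 4 * (m:ℝ) + 1 ≤ s) (h3 : s ≤ 4 * (m:ℝ) + 3) :
    Nfun s ≤ 0 := by
  have hπ := Real.pi_pos
  have e : Real.pi / 2 * s = (Real.pi / 2 * (s - 4 * (m:ℝ))) + (m:ℤ) * (2 * Real.pi) := by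
    push_cast; ring
  have hc : Real.cos (Real.pi / 2 * s) ≤ 0 := by
    rw [e, Real.cos_add_int_mul_two_pi]
    apply Real.cos_nonpos_of_pi_div_two_le_of_le
    · nlinarith
    · nlinarith
  have h := Real.exp_pos (s ^ 2)
  unfold Nfun
  nlinarith

lemma Nfun_le (m : ℕ) {ε s : ℝ} (hε0 : 0 < ε) (hε1 : ε < 1)
    (ha : 4 * (m:ℝ) + 2 - ε ≤ s) (hb : s ≤ 4 * (m:ℝ) + 2 + ε) :
    Nfun s ≤ -(Real.cos (Real.pi / 2 * ε) * Real.exp ((4 * (m:ℝ) + 2 - ε) ^ 2)) := by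
  have hπ := Real.pi_pos
  set z := Real.pi / 2 * (s - 4 * (m:ℝ) - 2) with hz
  have e : Real.pi / 2 * s = (z + Real.pi) + (m:ℤ) * (2 * Real.pi) := by
    rw [hz]; push_cast; ring
  have hcos : Real.cos (Real.pi / 2 * s) = - Real.cos z := by
    rw [e, Real.cos_add_int_mul_two_pi, Real.cos_add_pi]
  have hzabs : |z| ≤ Real.pi / 2 * ε := by
    rw [hz, abs_mul, abs_of_pos (by positivity : (0:ℝ) < Real.pi / 2)]
    have h1 : |s - 4 * (m:ℝ) - 2| ≤ ε := abs_le.2 ⟨by linarith, by linarith⟩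
    nlinarith
  have hcz : Real.cos (Real.pi / 2 * ε) ≤ Real.cos z := by
    rw [← Real.cos_abs z]
    exact Real.cos_le_cos_of_nonneg_of_le_pi (abs_nonneg z) (by nlinarith) hzabs
  have hcpos : 0 < Real.cos (Real.pi / 2 * ε) :=
    Real.cos_pos_of_mem_Ioo ⟨by nlinarith, by nlinarith⟩
  have hs0 : (0:ℝ) ≤ 4 * (m:ℝ) + 2 - ε := by
    have : (0:ℝ) ≤ (m:ℝ) := Nat.cast_nonneg m
    linarith
  have hexp : Real.exp ((4 * (m:ℝ) + 2 - ε) ^ 2) ≤ Real.exp (s ^ 2) :=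
    Real.exp_le_exp.2 (by nlinarith)
  have hexp0 := Real.exp_pos ((4 * (m:ℝ) + 2 - ε) ^ 2)
  have hexps := Real.exp_pos (s ^ 2)
  unfold Nfun
  rw [hcos]
  nlinarith [mul_le_mul_of_nonneg_left hcz hexps.le,
    mul_le_mul_of_nonneg_right hexp hcpos.le]

/-- Negative-excursion estimate (Case 1 of the paper's Nussbaum lemma): if `𝒳` increases
from `4m+1` to `4m+3` on `[t₁, t₂]`, then
`∫_{t₁}^{t₂} (ρ N(𝒳) 𝒳' − 𝒳') e^{λ(τ−t₂)} dτ ≤ −2ε(ρmin cos((π/2)ε) e^{(4m+2−ε)²} + 1) e^{λ(t₁−t₂)}`. -/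
theorem negative_excursion_estimate (m : ℕ) (ε : ℝ) (hε : ε ∈ Set.Ioo (0:ℝ) 1)
    (lam : ℝ) (hlam : 0 < lam) (t₁ t₂ : ℝ) (ht : t₁ < t₂) (ρ 𝒳 : ℝ → ℝ)
    (hρcont : ContinuousOn ρ (Set.Icc t₁ t₂)) (ρmin : ℝ) (hρmin : 0 < ρmin)
    (hρ : ∀ τ ∈ Set.Icc t₁ t₂, ρmin ≤ ρ τ)
    (h𝒳 : ContDiffOn ℝ 1 𝒳 (Set.Icc t₁ t₂))
    (h𝒳' : ∀ τ ∈ Set.Icc t₁ t₂, 0 ≤ deriv 𝒳 τ)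
    (h𝒳₁ : 𝒳 t₁ = 4 * (m:ℝ) + 1) (h𝒳₂ : 𝒳 t₂ = 4 * (m:ℝ) + 3) :
    (∫ τ in t₁..t₂, (ρ τ * Nfun (𝒳 τ) * deriv 𝒳 τ - deriv 𝒳 τ) * Real.exp (lam * (τ - t₂))) ≤
      -2 * ε * (ρmin * Real.cos (Real.pi / 2 * ε) * Real.exp ((4 * (m:ℝ) + 2 - ε) ^ 2) + 1) *
        Real.exp (lam * (t₁ - t₂)) := by
  obtain ⟨hε0, hε1⟩ := hε
  set K := Real.exp (lam * (t₁ - t₂)) with hK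
  have hK0 : 0 < K := Real.exp_pos _
  set d := derivWithin 𝒳 (Set.Icc t₁ t₂) with hd
  have huD : UniqueDiffOn ℝ (Set.Icc t₁ t₂) := uniqueDiffOn_Icc ht
  have hXc : ContinuousOn 𝒳 (Set.Icc t₁ t₂) := h𝒳.continuousOn
  have hdc : ContinuousOn d (Set.Icc t₁ t₂) := h𝒳.continuousOn_derivWithin huD le_rfl
  have hmemnhds : ∀ x ∈ Set.Ioo t₁ t₂, Set.Icc t₁ t₂ ∈ nhds x :=
    fun x hx => Icc_mem_nhds hx.1 hx.2
  have hdeq : ∀ x ∈ Set.Ioo t₁ t₂, d x = deriv 𝒳 x :=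
    fun x hx => derivWithin_of_mem_nhds (hmemnhds x hx)
  have hdiff : ∀ x ∈ Set.Ioo t₁ t₂, HasDerivAt 𝒳 (d x) x := by
    intro x hx
    rw [hdeq x hx]
    exact ((h𝒳.differentiableOn one_ne_zero).differentiableAt (hmemnhds x hx)).hasDerivAt
  have hd0 : ∀ x ∈ Set.Ioo t₁ t₂, 0 ≤ d x := by
    intro x hx
    rw [hdeq x hx]
    exact h𝒳' x (Set.Ioo_subset_Icc_self hx)
  have hmono : MonotoneOn 𝒳 (Set.Icc t₁ t₂) := by
    apply monotoneOn_of_deriv_nonneg (convex_Icc t₁ t₂) hXc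
    · rw [interior_Icc]
      exact (h𝒳.differentiableOn one_ne_zero).mono Set.Ioo_subset_Icc_self
    · intro x hx
      rw [interior_Icc] at hx
      exact h𝒳' x (Set.Ioo_subset_Icc_self hx)
  have hXmem : ∀ τ ∈ Set.Icc t₁ t₂, 4 * (m:ℝ) + 1 ≤ 𝒳 τ ∧ 𝒳 τ ≤ 4 * (m:ℝ) + 3 := by
    intro τ hτ
    constructor
    · rw [← h𝒳₁]; exact hmono (Set.left_mem_Icc.2 ht.le) hτ hτ.1
    · rw [← h𝒳₂]; exact hmono hτ (Set.right_mem_Icc.2 ht.le) hτ.2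
  -- the continuous replacement of the integrand
  have hQcont : ContinuousOn (fun τ => (ρ τ * Nfun (𝒳 τ) - 1) * d τ * Real.exp (lam * (τ - t₂)))
      (Set.Icc t₁ t₂) := by
    apply ContinuousOn.mul
    · exact (((hρcont.mul (Nfun_continuous.comp_continuousOn hXc)).sub continuousOn_const).mul hdc)
    · exact (Real.continuous_exp.comp (by fun_prop)).continuousOn
  have hScont : ContinuousOn (fun τ => (ρmin * Nfun (𝒳 τ) - 1) * d τ) (Set.Icc t₁ t₂) :=
    ((continuousOn_const.mul (Nfun_continuous.comp_continuousOn hXc)).sub continuousOn_const).mul hdc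
  have hQint : IntervalIntegrable
      (fun τ => (ρ τ * Nfun (𝒳 τ) - 1) * d τ * Real.exp (lam * (τ - t₂))) MeasureTheory.volume t₁ t₂ := by
    apply ContinuousOn.intervalIntegrable
    rwa [Set.uIcc_of_le ht.le]
  have hSint : IntervalIntegrable (fun τ => (ρmin * Nfun (𝒳 τ) - 1) * d τ)
      MeasureTheory.volume t₁ t₂ := by
    apply ContinuousOn.intervalIntegrable
    rwa [Set.uIcc_of_le ht.le]
  have hRint : IntervalIntegrable (fun τ => (ρmin * Nfun (𝒳 τ) - 1) * d τ * K)
      MeasureTheory.volume t₁ t₂ := hSint.mul_const K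
  -- a.e. avoidance of the endpoints
  have hae : ∀ᵐ x : ℝ, x ≠ t₁ ∧ x ≠ t₂ := by
    have h1 : ∀ᵐ x : ℝ, x ≠ t₁ := by
      have : (MeasureTheory.volume : MeasureTheory.Measure ℝ) {t₁} = 0 := by simp
      exact MeasureTheory.ae_iff.2 (by simpa using this)
    have h2 : ∀ᵐ x : ℝ, x ≠ t₂ := by
      have : (MeasureTheory.volume : MeasureTheory.Measure ℝ) {t₂} = 0 := by simp
      exact MeasureTheory.ae_iff.2 (by simpa using this)
    exact h1.and h2
  -- Step A: replace `deriv` by `derivWithin` in the integral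
  have stepA : (∫ τ in t₁..t₂, (ρ τ * Nfun (𝒳 τ) * deriv 𝒳 τ - deriv 𝒳 τ) * Real.exp (lam * (τ - t₂)))
      = ∫ τ in t₁..t₂, (ρ τ * Nfun (𝒳 τ) - 1) * d τ * Real.exp (lam * (τ - t₂)) := by
    apply intervalIntegral.integral_congr_ae
    filter_upwards [hae] with x hx hxI
    rw [Set.uIoc_of_le ht.le] at hxI
    have hxIoo : x ∈ Set.Ioo t₁ t₂ := ⟨hxI.1, lt_of_le_of_ne hxI.2 hx.2⟩
    rw [← hdeq x hxIoo]
    ring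
  -- Step B: pointwise (a.e.) comparison
  have stepB : (∫ τ in t₁..t₂, (ρ τ * Nfun (𝒳 τ) - 1) * d τ * Real.exp (lam * (τ - t₂)))
      ≤ ∫ τ in t₁..t₂, (ρmin * Nfun (𝒳 τ) - 1) * d τ * K := by
    apply intervalIntegral.integral_mono_ae_restrict ht.le hQint hRint
    have haeIcc : ∀ᵐ x ∂(MeasureTheory.volume.restrict (Set.Icc t₁ t₂)), x ∈ Set.Icc t₁ t₂ :=
      MeasureTheory.ae_restrict_mem measurableSet_Icc
    filter_upwards [haeIcc, MeasureTheory.ae_restrict_of_ae hae] with x hxI hx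
    have hxIoo : x ∈ Set.Ioo t₁ t₂ :=
      ⟨lt_of_le_of_ne hxI.1 (Ne.symm hx.1), lt_of_le_of_ne hxI.2 hx.2⟩
    have hN : Nfun (𝒳 x) ≤ 0 := Nfun_nonpos m (hXmem x hxI).1 (hXmem x hxI).2
    have hρx : ρmin ≤ ρ x := hρ x hxI
    have hdx : 0 ≤ d x := hd0 x hxIoo
    have hwK : K ≤ Real.exp (lam * (x - t₂)) := by
      apply Real.exp_le_exp.2
      nlinarith [hxIoo.1]
    have e2 : ρ x * Nfun (𝒳 x) - 1 ≤ 0 := by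
      nlinarith [mul_nonneg (le_trans hρmin.le hρx) (neg_nonneg.2 hN)]
    have e1 : ρ x * Nfun (𝒳 x) - 1 ≤ ρmin * Nfun (𝒳 x) - 1 := by
      nlinarith [mul_nonneg (sub_nonneg.2 hρx) (neg_nonneg.2 hN)]
    have e3 : (ρ x * Nfun (𝒳 x) - 1) * Real.exp (lam * (x - t₂))
        ≤ (ρ x * Nfun (𝒳 x) - 1) * K := mul_le_mul_of_nonpos_left hwK e2
    have e4 : (ρ x * Nfun (𝒳 x) - 1) * K ≤ (ρmin * Nfun (𝒳 x) - 1) * K :=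
      mul_le_mul_of_nonneg_right e1 hK0.le
    have e5 := mul_le_mul_of_nonneg_right (e3.trans e4) hdx
    calc (ρ x * Nfun (𝒳 x) - 1) * d x * Real.exp (lam * (x - t₂))
        = (ρ x * Nfun (𝒳 x) - 1) * Real.exp (lam * (x - t₂)) * d x := by ring
      _ ≤ (ρmin * Nfun (𝒳 x) - 1) * K * d x := e5
      _ = (ρmin * Nfun (𝒳 x) - 1) * d x * K := by ring
  -- Step C: pull out the constant
  have stepC : (∫ τ in t₁..t₂, (ρmin * Nfun (𝒳 τ) - 1) * d τ * K)
      = (∫ τ in t₁..t₂, (ρmin * Nfun (𝒳 τ) - 1) * d τ) * K :=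
    intervalIntegral.integral_mul_const K _
  -- Step D: FTC with antiderivative F
  set F : ℝ → ℝ := fun s => ρmin * (∫ u in (0:ℝ)..s, Nfun u) - s with hF
  have hFderiv : ∀ s : ℝ, HasDerivAt F (ρmin * Nfun s - 1) s := by
    intro s
    have h1 : HasDerivAt (fun u => ∫ x in (0:ℝ)..u, Nfun x) (Nfun s) s :=
      intervalIntegral.integral_hasDerivAt_right
        (Nfun_continuous.intervalIntegrable _ _)
        (Nfun_continuous.stronglyMeasurableAtFilter _ _)
        Nfun_continuous.continuousAt
    exact (h1.const_mul ρmin).sub (hasDerivAt_id s)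
  have hFcont : Continuous F :=
    continuous_iff_continuousAt.2 fun s => (hFderiv s).differentiableAt.continuousAt
  have stepD : (∫ τ in t₁..t₂, (ρmin * Nfun (𝒳 τ) - 1) * d τ) = F (𝒳 t₂) - F (𝒳 t₁) := by
    apply intervalIntegral.integral_eq_sub_of_hasDeriv_right_of_le ht.le
      (hFcont.comp_continuousOn hXc)
      (fun x hx => (((hFderiv (𝒳 x)).comp x (hdiff x hx))).hasDerivWithinAt) hSint
  -- evaluate F at the endpoints
  have hJ : F (𝒳 t₂) - F (𝒳 t₁)
      = ρmin * (∫ u in (4 * (m:ℝ) + 1)..(4 * (m:ℝ) + 3), Nfun u) - 2 := by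
    rw [h𝒳₁, h𝒳₂, hF]
    have := intervalIntegral.integral_interval_sub_left
      (Nfun_continuous.intervalIntegrable (μ := MeasureTheory.volume) (0:ℝ) (4 * (m:ℝ) + 3))
      (Nfun_continuous.intervalIntegrable (μ := MeasureTheory.volume) (0:ℝ) (4 * (m:ℝ) + 1))
    simp only
    rw [← this]
    ring
  -- Step E: bound the integral of Nfun over [4m+1, 4m+3]
  set C := Real.cos (Real.pi / 2 * ε) * Real.exp ((4 * (m:ℝ) + 2 - ε) ^ 2) with hC
  have hC0 : 0 < C := by
    apply mul_pos _ (Real.exp_pos _)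
    apply Real.cos_pos_of_mem_Ioo
    constructor <;> nlinarith [Real.pi_pos]
  have hm0 : (0:ℝ) ≤ (m:ℝ) := Nat.cast_nonneg m
  have ha1 : 4 * (m:ℝ) + 1 ≤ 4 * (m:ℝ) + 2 - ε := by linarith
  have hab : 4 * (m:ℝ) + 2 - ε ≤ 4 * (m:ℝ) + 2 + ε := by linarith
  have hb3 : 4 * (m:ℝ) + 2 + ε ≤ 4 * (m:ℝ) + 3 := by linarith
  have hint : ∀ u v : ℝ, IntervalIntegrable Nfun MeasureTheory.volume u v :=
    fun u v => Nfun_continuous.intervalIntegrable u v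
  have stepE : (∫ u in (4 * (m:ℝ) + 1)..(4 * (m:ℝ) + 3), Nfun u) ≤ -(2 * ε * C) := by
    have split1 : (∫ u in (4 * (m:ℝ) + 1)..(4 * (m:ℝ) + 2 - ε), Nfun u)
        + (∫ u in (4 * (m:ℝ) + 2 - ε)..(4 * (m:ℝ) + 3), Nfun u)
        = ∫ u in (4 * (m:ℝ) + 1)..(4 * (m:ℝ) + 3), Nfun u :=
      intervalIntegral.integral_add_adjacent_intervals (hint _ _) (hint _ _)
    have split2 : (∫ u in (4 * (m:ℝ) + 2 - ε)..(4 * (m:ℝ) + 2 + ε), Nfun u)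
        + (∫ u in (4 * (m:ℝ) + 2 + ε)..(4 * (m:ℝ) + 3), Nfun u)
        = ∫ u in (4 * (m:ℝ) + 2 - ε)..(4 * (m:ℝ) + 3), Nfun u :=
      intervalIntegral.integral_add_adjacent_intervals (hint _ _) (hint _ _)
    have b1 : (∫ u in (4 * (m:ℝ) + 1)..(4 * (m:ℝ) + 2 - ε), Nfun u) ≤ 0 := by
      have h0 : (∫ u in (4 * (m:ℝ) + 1)..(4 * (m:ℝ) + 2 - ε), (0:ℝ)) = 0 := by simp
      rw [← h0]
      apply intervalIntegral.integral_mono_on ha1 (hint _ _) intervalIntegrable_const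
      intro x hx
      exact Nfun_nonpos m (by linarith [hx.1]) (by linarith [hx.2])
    have b3 : (∫ u in (4 * (m:ℝ) + 2 + ε)..(4 * (m:ℝ) + 3), Nfun u) ≤ 0 := by
      have h0 : (∫ u in (4 * (m:ℝ) + 2 + ε)..(4 * (m:ℝ) + 3), (0:ℝ)) = 0 := by simp
      rw [← h0]
      apply intervalIntegral.integral_mono_on hb3 (hint _ _) intervalIntegrable_const
      intro x hx
      exact Nfun_nonpos m (by linarith [hx.1]) (by linarith [hx.2])
    have b2 : (∫ u in (4 * (m:ℝ) + 2 - ε)..(4 * (m:ℝ) + 2 + ε), Nfun u) ≤ -(2 * ε * C) := by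
      have hmono2 : (∫ u in (4 * (m:ℝ) + 2 - ε)..(4 * (m:ℝ) + 2 + ε), Nfun u)
          ≤ ∫ u in (4 * (m:ℝ) + 2 - ε)..(4 * (m:ℝ) + 2 + ε), (-C) := by
        apply intervalIntegral.integral_mono_on hab (hint _ _) intervalIntegrable_const
        intro x hx
        exact Nfun_le m hε0 hε1 hx.1 hx.2
      have hconst : (∫ u in (4 * (m:ℝ) + 2 - ε)..(4 * (m:ℝ) + 2 + ε), (-C)) = -(2 * ε * C) := by
        rw [intervalIntegral.integral_const]
        simp only [smul_eq_mul]
        ring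
      linarith
    linarith
  -- final combination
  rw [stepA]
  calc (∫ τ in t₁..t₂, (ρ τ * Nfun (𝒳 τ) - 1) * d τ * Real.exp (lam * (τ - t₂)))
      ≤ ∫ τ in t₁..t₂, (ρmin * Nfun (𝒳 τ) - 1) * d τ * K := stepB
    _ = (∫ τ in t₁..t₂, (ρmin * Nfun (𝒳 τ) - 1) * d τ) * K := stepC
    _ = (ρmin * (∫ u in (4 * (m:ℝ) + 1)..(4 * (m:ℝ) + 3), Nfun u) - 2) * K := by
        rw [stepD, hJ]
    _ ≤ -2 * ε * (ρmin * Real.cos (Real.pi / 2 * ε) * Real.exp ((4 * (m:ℝ) + 2 - ε) ^ 2) + 1) * K := by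
        have h1 : ρmin * (∫ u in (4 * (m:ℝ) + 1)..(4 * (m:ℝ) + 3), Nfun u) ≤ ρmin * (-(2 * ε * C)) :=
          mul_le_mul_of_nonneg_left stepE hρmin.le
        have h2 : ρmin * (∫ u in (4 * (m:ℝ) + 1)..(4 * (m:ℝ) + 3), Nfun u) - 2
            ≤ -2 * ε * (ρmin * C + 1) := by nlinarith
        have := mul_le_mul_of_nonneg_right h2 hK0.le
        calc (ρmin * (∫ u in (4 * (m:ℝ) + 1)..(4 * (m:ℝ) + 3), Nfun u) - 2) * K
            ≤ (-2 * ε * (ρmin * C + 1)) * K := this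
          _ = -2 * ε * (ρmin * Real.cos (Real.pi / 2 * ε) * Real.exp ((4 * (m:ℝ) + 2 - ε) ^ 2) + 1) * K := by
              rw [hC]; ring
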